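/- For every n ∈ ℕ, the sum of reciprocals of binomial coefficients satisfies ∑_{k=0}^n (C(n,k))^{-1} = ((n+1)/2^n) · ∑_{k=0}^n 2^k/(k+1). -/

import Mathlib

lemma key_pair (n k : ℕ) (hk : k ≤ n) :
    (((n+1).choose k : ℝ))⁻¹ + (((n+1).choose (k+1) : ℝ))⁻¹ =
      ((n:ℝ)+2)/((n:ℝ)+1) * ((n.choose k : ℝ))⁻¹ := by
  have ha : 0 < (n.choose k : ℝ) := by
    exact_mod_cast Nat.choose_pos hk
  have hb : 0 < ((n+1).choose k : ℝ) := by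
    exact_mod_cast Nat.choose_pos (hk.trans (Nat.le_succ n))
  have hc : 0 < ((n+1).choose (k+1) : ℝ) := by
    exact_mod_cast Nat.choose_pos (Nat.succ_le_succ hk)
  have e1 : ((n+1).choose (k+1) : ℝ) * ((k:ℝ)+1) = ((n:ℝ)+1) * (n.choose k : ℝ) := by
    have h := Nat.add_one_mul_choose_eq n k
    exact_mod_cast h.symm
  have e2 : ((n+1).choose k : ℝ) * (((n:ℝ)+1) - (k:ℝ)) = (n.choose k : ℝ) * ((n:ℝ)+1) := by
    have h := Nat.choose_mul_succ_eq n k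
    have hc' : ((n.choose k * (n + 1) : ℕ) : ℝ) = (((n+1).choose k * (n + 1 - k) : ℕ) : ℝ) := by
      exact_mod_cast congrArg (Nat.cast : ℕ → ℝ) h
    have hsub : ((n + 1 - k : ℕ) : ℝ) = ((n:ℝ)+1) - (k:ℝ) := by
      have : k ≤ n + 1 := hk.trans (Nat.le_succ n)
      push_cast [Nat.cast_sub this]
      ring
    push_cast [hsub] at hc'
    linarith
  have hn1 : ((n:ℝ)+1) ≠ 0 := by positivity
  field_simp
  nlinarith [e1, e2, mul_pos hb hc, mul_pos ha hb, mul_pos ha hc]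

theorem stmt_2 (n : ℕ) :
    ∑ k ∈ Finset.range (n + 1), ((n.choose k : ℝ))⁻¹ =
      ((n + 1 : ℝ) / 2 ^ n) * ∑ k ∈ Finset.range (n + 1), (2 : ℝ) ^ k / (k + 1) := by
  induction n with
  | zero => norm_num
  | succ n ih =>
    set S : ℝ := ∑ k ∈ Finset.range (n + 1), ((n.choose k : ℝ))⁻¹ with hS
    set T : ℝ := ∑ k ∈ Finset.range (n + 1), (2 : ℝ) ^ k / (k + 1) with hT
    have hn1 : ((n:ℝ)+1) ≠ 0 := by positivity
    have h2n : (2:ℝ)^n ≠ 0 := by positivity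
    -- recurrence for LHS
    have h1 : ∑ k ∈ Finset.range (n + 2), (((n+1).choose k : ℝ))⁻¹
        = (∑ k ∈ Finset.range (n + 1), (((n+1).choose k : ℝ))⁻¹) + 1 := by
      rw [Finset.sum_range_succ, Nat.choose_self]
      norm_num
    have h2 : ∑ k ∈ Finset.range (n + 2), (((n+1).choose k : ℝ))⁻¹
        = 1 + ∑ k ∈ Finset.range (n + 1), (((n+1).choose (k+1) : ℝ))⁻¹ := by
      rw [Finset.sum_range_succ', Nat.choose_zero_right]
      norm_num
      ring
    have hsum : (∑ k ∈ Finset.range (n + 1), (((n+1).choose k : ℝ))⁻¹)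
        + ∑ k ∈ Finset.range (n + 1), (((n+1).choose (k+1) : ℝ))⁻¹
        = (((n:ℝ)+2)/((n:ℝ)+1)) * S := by
      rw [← Finset.sum_add_distrib, hS, Finset.mul_sum]
      apply Finset.sum_congr rfl
      intro k hk
      exact key_pair n k (Nat.lt_succ_iff.mp (Finset.mem_range.mp hk))
    have hrec : ∑ k ∈ Finset.range (n + 2), (((n+1).choose k : ℝ))⁻¹
        = 1 + (((n:ℝ)+2)/(2*((n:ℝ)+1))) * S := by
      have h3 : 2 * (∑ k ∈ Finset.range (n + 2), (((n+1).choose k : ℝ))⁻¹)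
          = 2 + (((n:ℝ)+2)/((n:ℝ)+1)) * S := by
        linarith [h1, h2, hsum]
      field_simp at h3 ⊢
      linarith
    rw [hrec, ih]
    rw [Finset.sum_range_succ]
    push_cast
    field_simp
    ring
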